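/- Let r ≥ 3, let k_1, k_2 be integers with 3 ≤ k_1 < k_2, and let k_j ≥ 3 for j = 3, 4, …, r. Then R(k_1, k_2, k_3, …, k_r) > (k_1 + 1) · (R(k_2 − k_1 + 1, k_3, …, k_r) − 1). -/

import Mathlib

/-- A coloring `χ` of the edges of the complete graph on `V` contains a
monochromatic `K_m` of color `c`: there are `m` vertices all of whose
pairwise edges receive color `c`. -/
def HasMonoClique {V C : Type*} (χ : V → V → C) (c : C) (m : ℕ) : Prop :=
  ∃ s : Finset V, s.card = m ∧ ∀ u ∈ s, ∀ v ∈ s, u ≠ v → χ u v = c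

/-- `N` satisfies the multicolor Ramsey property for clique sizes `k : Fin r → ℕ`:
every symmetric `r`-coloring of the edges of `K_N` contains, for some color `i`,
a monochromatic `K_{k i}` of color `i`. -/
def RamseyProp (r : ℕ) (k : Fin r → ℕ) (N : ℕ) : Prop :=
  ∀ χ : Fin N → Fin N → Fin r, (∀ u v, χ u v = χ v u) →
    ∃ i : Fin r, HasMonoClique χ i (k i)

/-- `N` is the multicolor Ramsey number `R(k 0, …, k (r-1))`: the least positive
integer with the Ramsey property. -/
def IsRamseyNumber (r : ℕ) (k : Fin r → ℕ) (N : ℕ) : Prop :=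
  0 < N ∧ RamseyProp r k N ∧ ∀ M, 0 < M → RamseyProp r k M → N ≤ M


lemma ramseyProp_mono {r : ℕ} {k : Fin r → ℕ} {N N' : ℕ} (h : RamseyProp r k N)
    (hle : N ≤ N') : RamseyProp r k N' := by
  intro χ hsym
  obtain ⟨i, s, hcard, hmono⟩ :=
    h (fun a b => χ (Fin.castLE hle a) (Fin.castLE hle b)) (fun a b => hsym _ _)
  refine ⟨i, s.map ⟨Fin.castLE hle, Fin.castLE_injective hle⟩, by simp [hcard], ?_⟩
  intro u hu v hv huv
  simp only [Finset.mem_map, Function.Embedding.coeFn_mk] at hu hv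
  obtain ⟨a, ha, rfl⟩ := hu
  obtain ⟨b, hb, rfl⟩ := hv
  exact hmono a ha b hb (fun hab => huv (by rw [hab]))

def bigColor (r m K1 : ℕ) (hr : 3 ≤ r) (χ' : Fin m → Fin m → Fin (r - 1))
    (u v : Fin (K1 + 1) × Fin m) : Fin r :=
  if u.2 = v.2 then
    if u.1.1 / 2 = v.1.1 / 2 ∧ u.1.1 ≠ v.1.1 then ⟨1, by omega⟩ else ⟨0, Nat.zero_lt_of_lt hr⟩
  else if (χ' u.2 v.2).1 = 0 then
    if u.1.1 / 2 = v.1.1 / 2 ∧ u.1.1 ≠ v.1.1 then ⟨0, Nat.zero_lt_of_lt hr⟩ else ⟨1, by omega⟩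
  else ⟨(χ' u.2 v.2).1 + 1, by have := (χ' u.2 v.2).isLt; omega⟩

lemma bigColor_symm (r m K1 : ℕ) (hr : 3 ≤ r) (χ' : Fin m → Fin m → Fin (r - 1))
    (hsym : ∀ x y, χ' x y = χ' y x) (u v : Fin (K1 + 1) × Fin m) :
    bigColor r m K1 hr χ' u v = bigColor r m K1 hr χ' v u := by
  obtain ⟨p, x⟩ := u
  obtain ⟨q, y⟩ := v
  unfold bigColor
  have hx := hsym y x
  clear hsym
  dsimp only
  split_ifs with h1 h2 h3 h4 h5 h6 h7 h8 h9 h10 <;>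
    first
      | rfl
      | (exact absurd h1.symm (by assumption))
      | (exact absurd (by assumption : _ = _).symm (by assumption))
      | (refine absurd ?_ (by assumption); constructor <;> omega)
      | (exfalso; omega)
      | (rw [hx])
      | (apply Fin.ext; simp only []; rw [hx])

lemma bigColor_eq0 {r m K1 : ℕ} {hr : 3 ≤ r} {χ' : Fin m → Fin m → Fin (r - 1)}
    {u v : Fin (K1 + 1) × Fin m} (h : bigColor r m K1 hr χ' u v = ⟨0, Nat.zero_lt_of_lt hr⟩) :
    (u.2 = v.2 ∧ ¬(u.1.1 / 2 = v.1.1 / 2 ∧ u.1.1 ≠ v.1.1)) ∨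
    (u.2 ≠ v.2 ∧ (χ' u.2 v.2).1 = 0 ∧ u.1.1 / 2 = v.1.1 / 2 ∧ u.1.1 ≠ v.1.1) := by
  unfold bigColor at h
  split_ifs at h with h1 h2 h3 h4 <;> simp_all [Fin.ext_iff]

lemma bigColor_eq1 {r m K1 : ℕ} {hr : 3 ≤ r} {χ' : Fin m → Fin m → Fin (r - 1)}
    {u v : Fin (K1 + 1) × Fin m} (h : bigColor r m K1 hr χ' u v = ⟨1, by omega⟩) :
    (u.2 = v.2 ∧ u.1.1 / 2 = v.1.1 / 2 ∧ u.1.1 ≠ v.1.1) ∨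
    (u.2 ≠ v.2 ∧ (χ' u.2 v.2).1 = 0 ∧ ¬(u.1.1 / 2 = v.1.1 / 2 ∧ u.1.1 ≠ v.1.1)) := by
  unfold bigColor at h
  split_ifs at h with h1 h2 h3 h4 <;> simp_all [Fin.ext_iff]

lemma bigColor_ge2 {r m K1 : ℕ} {hr : 3 ≤ r} {χ' : Fin m → Fin m → Fin (r - 1)}
    {u v : Fin (K1 + 1) × Fin m} {c : Fin r} (hc : 2 ≤ c.1)
    (h : bigColor r m K1 hr χ' u v = c) :
    u.2 ≠ v.2 ∧ (χ' u.2 v.2).1 + 1 = c.1 := by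
  unfold bigColor at h
  split_ifs at h with h1 h2 h3 h4 <;> simp_all [Fin.ext_iff] <;> omega

set_option maxHeartbeats 2000000 in
lemma construction (r : ℕ) (hr : 3 ≤ r) (k : Fin r → ℕ) (K1 K2 : ℕ)
    (h0 : k ⟨0, Nat.zero_lt_of_lt hr⟩ = K1) (h1 : k ⟨1, by omega⟩ = K2)
    (hk1 : 3 ≤ K1) (hk12 : K1 < K2)
    (m : ℕ) (χ' : Fin m → Fin m → Fin (r - 1)) (hsym : ∀ x y, χ' x y = χ' y x)
    (hno0 : ¬ HasMonoClique χ' ⟨0, by omega⟩ (K2 - K1 + 1))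
    (hnoj : ∀ j : Fin (r - 1), j.1 ≠ 0 →
      ¬ HasMonoClique χ' j (k ⟨j.1 + 1, by have := j.2; omega⟩)) :
    ¬ RamseyProp r k ((K1 + 1) * m) := by
  intro hR
  let e : Fin (K1 + 1) × Fin m ≃ Fin ((K1 + 1) * m) := finProdFinEquiv
  obtain ⟨i, s, hcard, hmono⟩ := hR
    (fun a b => bigColor r m K1 hr χ' (e.symm a) (e.symm b))
    (fun a b => bigColor_symm r m K1 hr χ' hsym _ _)
  set t : Finset (Fin (K1 + 1) × Fin m) := s.map e.symm.toEmbedding with htdef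
  have htcard : t.card = k i := by rw [htdef, Finset.card_map, hcard]
  have htmono : ∀ u ∈ t, ∀ v ∈ t, u ≠ v → bigColor r m K1 hr χ' u v = i := by
    intro u hu v hv huv
    rw [htdef] at hu hv
    simp only [Finset.mem_map, Equiv.coe_toEmbedding] at hu hv
    obtain ⟨a, _, rfl⟩ := hu
    obtain ⟨b, hb, rfl⟩ := hv
    exact hmono a ‹_› b hb (fun h => huv (by rw [h]))
  clear hmono hcard htdef
  by_cases hi0 : i.1 = 0
  -- ===================== color 0 =====================
  · have hieq : i = (⟨0, by omega⟩ : Fin r) := Fin.ext hi0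
    have hcardt : t.card = K1 := htcard.trans ((congrArg k hieq).trans h0)
    have hA : ∀ u ∈ t, ∀ v ∈ t, u ≠ v → u.2 = v.2 →
        u.1.1 ≠ v.1.1 ∧ u.1.1 / 2 ≠ v.1.1 / 2 := by
      intro u hu v hv huv h2
      have hc := bigColor_eq0 (hieq ▸ htmono u hu v hv huv)
      rcases hc with ⟨_, hnp⟩ | ⟨hne, _⟩
      · have hp : u.1.1 ≠ v.1.1 := by
          intro h
          exact huv (Prod.ext (Fin.ext h) h2)
        exact ⟨hp, fun hdiv => hnp ⟨hdiv, hp⟩⟩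
      · exact absurd h2 hne
    have hB : ∀ u ∈ t, ∀ v ∈ t, u.2 ≠ v.2 →
        u.1.1 / 2 = v.1.1 / 2 ∧ u.1.1 ≠ v.1.1 := by
      intro u hu v hv h2
      have huv : u ≠ v := fun h => h2 (by rw [h])
      have hc := bigColor_eq0 (hieq ▸ htmono u hu v hv huv)
      rcases hc with ⟨h', _⟩ | ⟨_, _, hp⟩
      · exact absurd h' h2
      · exact hp
    by_cases hone : ∀ u ∈ t, ∀ v ∈ t, u.2 = v.2
    · -- all in one block
      have hPinj : Set.InjOn (Prod.fst : Fin (K1 + 1) × Fin m → Fin (K1 + 1)) ↑t := by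
        intro u hu v hv h
        by_contra hne
        exact (hA u hu v hv hne (hone u hu v hv)).1 (congrArg Fin.val h)
      set P : Finset (Fin (K1 + 1)) := t.image Prod.fst with hPdef
      have hPcard : P.card = K1 := by
        rw [hPdef, Finset.card_image_of_injOn hPinj, hcardt]
      have hpair : ∃ p ∈ P, ∃ q ∈ P, p.1 / 2 = q.1 / 2 ∧ p.1 ≠ q.1 := by
        by_cases c0 : (⟨0, by omega⟩ : Fin (K1 + 1)) ∈ P ∧ (⟨1, by omega⟩ : Fin (K1 + 1)) ∈ P
        · exact ⟨_, c0.1, _, c0.2, by norm_num⟩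
        · by_cases c2 : (⟨2, by omega⟩ : Fin (K1 + 1)) ∈ P ∧ (⟨3, by omega⟩ : Fin (K1 + 1)) ∈ P
          · exact ⟨_, c2.1, _, c2.2, by norm_num⟩
          · exfalso
            rw [not_and_or] at c0 c2
            obtain ⟨a, ha, ha1⟩ : ∃ a : Fin (K1 + 1), a ∉ P ∧ a.1 ≤ 1 := by
              rcases c0 with h | h
              · exact ⟨_, h, by norm_num⟩
              · exact ⟨_, h, by norm_num⟩
            obtain ⟨b, hb, hb2⟩ : ∃ b : Fin (K1 + 1), b ∉ P ∧ 2 ≤ b.1 := by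
              rcases c2 with h | h
              · exact ⟨_, h, by norm_num⟩
              · exact ⟨_, h, by norm_num⟩
            have hba : b ≠ a := by
              intro h; rw [h] at hb2; omega
            have hsub : P ⊆ (Finset.univ.erase a).erase b := by
              intro x hx
              refine Finset.mem_erase.mpr ⟨?_, Finset.mem_erase.mpr ⟨?_, Finset.mem_univ x⟩⟩
              · rintro rfl; exact hb hx
              · rintro rfl; exact ha hx
            have hle := Finset.card_le_card hsub
            rw [hPcard, Finset.card_erase_of_mem
                (Finset.mem_erase.mpr ⟨hba, Finset.mem_univ b⟩),
                Finset.card_erase_of_mem (Finset.mem_univ a), Finset.card_univ,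
                Fintype.card_fin] at hle
            omega
      obtain ⟨p, hp, q, hq, hdiv, hne⟩ := hpair
      rw [hPdef, Finset.mem_image] at hp hq
      obtain ⟨u, hu, rfl⟩ := hp
      obtain ⟨v, hv, rfl⟩ := hq
      have huv : u ≠ v := fun h => hne (by rw [h])
      exact (hA u hu v hv huv (hone u hu v hv)).2 hdiv
    · push_neg at hone
      obtain ⟨u0, hu0, v0, hv0, h00⟩ := hone
      by_cases htwo : ∃ u ∈ t, ∃ v ∈ t, u ≠ v ∧ u.2 = v.2
      · obtain ⟨u, hu, v, hv, huv, hblock⟩ := htwo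
        obtain ⟨w, hw, hwu⟩ : ∃ w ∈ t, w.2 ≠ u.2 := by
          by_cases h : u0.2 = u.2
          · exact ⟨v0, hv0, fun hh => h00 (h ▸ hh ▸ rfl)⟩
          · exact ⟨u0, hu0, h⟩
        have h1' := hB w hw u hu hwu
        have h2' := hB w hw v hv (fun hh => hwu (hh.trans hblock.symm))
        have h3' := (hA u hu v hv huv hblock).2
        omega
      · push_neg at htwo
        have hne3 : 3 ≤ t.card := by omega
        obtain ⟨u, hu⟩ := Finset.card_pos.mp (by omega : 0 < t.card)
        have h2 : 0 < (t.erase u).card := by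
          rw [Finset.card_erase_of_mem hu]; omega
        obtain ⟨v, hv'⟩ := Finset.card_pos.mp h2
        have hvt : v ∈ t := Finset.mem_of_mem_erase hv'
        have hvu : v ≠ u := Finset.ne_of_mem_erase hv'
        have h3 : 0 < ((t.erase u).erase v).card := by
          rw [Finset.card_erase_of_mem hv', Finset.card_erase_of_mem hu]; omega
        obtain ⟨w, hw'⟩ := Finset.card_pos.mp h3
        have hwt : w ∈ t := Finset.mem_of_mem_erase (Finset.mem_of_mem_erase hw')
        have hwv : w ≠ v := Finset.ne_of_mem_erase hw'
        have hwu : w ≠ u := Finset.ne_of_mem_erase (Finset.mem_of_mem_erase hw')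
        have d1 := hB u hu v hvt (htwo u hu v hvt (Ne.symm hvu))
        have d2 := hB u hu w hwt (htwo u hu w hwt (Ne.symm hwu))
        have d3 := hB v hvt w hwt (htwo v hvt w hwt (Ne.symm hwv))
        omega
  · by_cases hi1 : i.1 = 1
    -- ===================== color 1 =====================
    · have hieq : i = (⟨1, by omega⟩ : Fin r) := Fin.ext hi1
      have hcardt : t.card = K2 := htcard.trans ((congrArg k hieq).trans h1)
      have hA : ∀ u ∈ t, ∀ v ∈ t, u ≠ v → u.2 = v.2 →
          u.1.1 / 2 = v.1.1 / 2 ∧ u.1.1 ≠ v.1.1 := by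
        intro u hu v hv huv h2
        have hc := bigColor_eq1 (hieq ▸ htmono u hu v hv huv)
        rcases hc with ⟨_, hp⟩ | ⟨hne, _⟩
        · exact hp
        · exact absurd h2 hne
      have hBf : ∀ u ∈ t, ∀ v ∈ t, u.2 ≠ v.2 →
          (χ' u.2 v.2).1 = 0 ∧ (u.1.1 / 2 = v.1.1 / 2 → u.1.1 = v.1.1) := by
        intro u hu v hv h2
        have huv : u ≠ v := fun h => h2 (by rw [h])
        have hc := bigColor_eq1 (hieq ▸ htmono u hu v hv huv)
        rcases hc with ⟨h', _⟩ | ⟨_, hz, hnp⟩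
        · exact absurd h' h2
        · refine ⟨hz, fun hdiv => ?_⟩
          by_contra hne
          exact hnp ⟨hdiv, hne⟩
      set B : Finset (Fin m) := t.image Prod.snd with hBdef
      set F : Fin m → Finset (Fin (K1 + 1) × Fin m) :=
        fun x => t.filter (fun u => u.2 = x) with hFdef
      have hFmem : ∀ {x u}, u ∈ F x → u ∈ t ∧ u.2 = x := by
        intro x u hu
        rw [hFdef, Finset.mem_filter] at hu
        exact hu
      have hFcard : ∀ x, (F x).card ≤ 2 := by
        intro x
        by_contra hgt
        push_neg at hgt
        obtain ⟨u, hu⟩ := Finset.card_pos.mp (by omega : 0 < (F x).card)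
        have h2 : 0 < ((F x).erase u).card := by
          rw [Finset.card_erase_of_mem hu]; omega
        obtain ⟨v, hv'⟩ := Finset.card_pos.mp h2
        have hvF : v ∈ F x := Finset.mem_of_mem_erase hv'
        have hvu : v ≠ u := Finset.ne_of_mem_erase hv'
        have h3 : 0 < (((F x).erase u).erase v).card := by
          rw [Finset.card_erase_of_mem hv', Finset.card_erase_of_mem hu]; omega
        obtain ⟨w, hw'⟩ := Finset.card_pos.mp h3
        have hwF : w ∈ F x := Finset.mem_of_mem_erase (Finset.mem_of_mem_erase hw')
        have hwv : w ≠ v := Finset.ne_of_mem_erase hw'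
        have hwu : w ≠ u := Finset.ne_of_mem_erase (Finset.mem_of_mem_erase hw')
        obtain ⟨hut, hux⟩ := hFmem hu
        obtain ⟨hvt, hvx⟩ := hFmem hvF
        obtain ⟨hwt, hwx⟩ := hFmem hwF
        have d1 := hA u hut v hvt (Ne.symm hvu) (hux.trans hvx.symm)
        have d2 := hA u hut w hwt (Ne.symm hwu) (hux.trans hwx.symm)
        have d3 := hA v hvt w hwt (Ne.symm hwv) (hvx.trans hwx.symm)
        omega
      have hBcard : B.card ≤ K2 - K1 := by
        by_contra hcon
        push_neg at hcon
        obtain ⟨B', hB'sub, hB'card⟩ :=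
          Finset.exists_subset_card_eq (show K2 - K1 + 1 ≤ B.card by omega)
        apply hno0
        refine ⟨B', hB'card, ?_⟩
        intro x hx y hy hxy
        have hx' := hB'sub hx
        have hy' := hB'sub hy
        rw [hBdef, Finset.mem_image] at hx' hy'
        obtain ⟨u, hu, rfl⟩ := hx'
        obtain ⟨v, hv, rfl⟩ := hy'
        exact Fin.ext (hBf u hu v hv hxy).1
      set D : Finset (Fin m) := B.filter (fun x => 2 ≤ (F x).card) with hDdef
      have hDcard : D.card ≤ K1 / 2 + 1 := by
        have hmaps : ∀ x ∈ D, (F x).sup (fun u => u.1.1 / 2) ∈ Finset.range (K1 / 2 + 1) := by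
          intro x _
          rw [Finset.mem_range]
          have hle : (F x).sup (fun u => u.1.1 / 2) ≤ K1 / 2 :=
            Finset.sup_le (fun u _ => Nat.div_le_div_right (by have := u.1.isLt; omega))
          omega
        have hinjD : Set.InjOn (fun x => (F x).sup (fun u => u.1.1 / 2)) ↑D := by
          intro x hx y hy hxy
          by_contra hne
          have hx2 : 2 ≤ (F x).card := (Finset.mem_filter.mp (Finset.mem_coe.mp hx)).2
          have hy2 : 2 ≤ (F y).card := (Finset.mem_filter.mp (Finset.mem_coe.mp hy)).2
          obtain ⟨u, hu⟩ := Finset.card_pos.mp (by omega : 0 < (F x).card)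
          have h2x : 0 < ((F x).erase u).card := by
            rw [Finset.card_erase_of_mem hu]; omega
          obtain ⟨u', hu''⟩ := Finset.card_pos.mp h2x
          have huF : u' ∈ F x := Finset.mem_of_mem_erase hu''
          have huu : u' ≠ u := Finset.ne_of_mem_erase hu''
          obtain ⟨v, hv⟩ := Finset.card_pos.mp (by omega : 0 < (F y).card)
          obtain ⟨hut, hux⟩ := hFmem hu
          obtain ⟨hu't, hu'x⟩ := hFmem huF
          obtain ⟨hvt, hvy⟩ := hFmem hv
          -- all of F x share div value u.1.1 / 2
          have hsupx : (F x).sup (fun w => w.1.1 / 2) = u.1.1 / 2 := by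
            refine le_antisymm (Finset.sup_le fun w hw => ?_) (Finset.le_sup (f := fun w => w.1.1 / 2) hu)
            obtain ⟨hwt, hwx⟩ := hFmem hw
            rcases eq_or_ne w u with rfl | hwu
            · exact le_refl _
            · rw [(hA w hwt u hut hwu (hwx.trans hux.symm)).1]
          have hsupy : (F y).sup (fun w => w.1.1 / 2) = v.1.1 / 2 := by
            refine le_antisymm (Finset.sup_le fun w hw => ?_) (Finset.le_sup (f := fun w => w.1.1 / 2) hv)
            obtain ⟨hwt, hwy⟩ := hFmem hw
            rcases eq_or_ne w v with rfl | hwv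
            · exact le_refl _
            · rw [(hA w hwt v hvt hwv (hwy.trans hvy.symm)).1]
          replace hxy : u.1.1 / 2 = v.1.1 / 2 := by
            rw [← hsupx, ← hsupy]; exact hxy
          -- u, u' in block x; v in block y; x ≠ y
          have hxyblk : u.2 ≠ v.2 := by rw [hux, hvy]; exact hne
          have hxyblk' : u'.2 ≠ v.2 := by rw [hu'x, hvy]; exact hne
          have e1 := (hBf u hut v hvt hxyblk).2 hxy
          have hdivu : u'.1.1 / 2 = u.1.1 / 2 :=
            (hA u' hu't u hut huu (hu'x.trans hux.symm)).1
          have e2 := (hBf u' hu't v hvt hxyblk').2 (hdivu.trans hxy)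
          have e3 := (hA u' hu't u hut huu (hu'x.trans hux.symm)).2
          omega
        have h := Finset.card_le_card_of_injOn _ hmaps hinjD
        simpa using h
      have hsum : t.card ≤ B.card + D.card := by
        rw [Finset.card_eq_sum_card_fiberwise
          (f := Prod.snd) (t := B) (fun u hu => Finset.mem_image_of_mem _ hu)]
        calc ∑ x ∈ B, (Finset.filter (fun a => a.2 = x) t).card
            ≤ ∑ x ∈ B, (1 + if 2 ≤ (F x).card then 1 else 0) := by
              apply Finset.sum_le_sum
              intro x _
              have h2 := hFcard x
              have : (Finset.filter (fun a => a.2 = x) t).card = (F x).card := rfl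
              rw [this]
              split_ifs <;> omega
          _ = B.card + D.card := by
              rw [Finset.sum_add_distrib, Finset.sum_const, smul_eq_mul, mul_one,
                Finset.sum_boole, hDdef]
              simp
      omega
    -- ===================== colors ≥ 2 =====================
    · have hi2 : 2 ≤ i.1 := by omega
      have hcross : ∀ u ∈ t, ∀ v ∈ t, u ≠ v → u.2 ≠ v.2 ∧ (χ' u.2 v.2).1 + 1 = i.1 :=
        fun u hu v hv huv => bigColor_ge2 hi2 (htmono u hu v hv huv)
      have hinj : Set.InjOn (Prod.snd : Fin (K1 + 1) × Fin m → Fin m) ↑t := by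
        intro u hu v hv h
        by_contra hne
        exact (hcross u hu v hv hne).1 h
      set B : Finset (Fin m) := t.image Prod.snd with hBdef
      have hBcard : B.card = k i := by
        rw [hBdef, Finset.card_image_of_injOn hinj, htcard]
      have hj0lt : i.1 - 1 < r - 1 := by have := i.isLt; omega
      apply hnoj ⟨i.1 - 1, hj0lt⟩ (by simp; omega)
      refine ⟨B, ?_, ?_⟩
      · exact hBcard.trans (congrArg k (Fin.ext (by simp; omega)))
      · intro x hx y hy hxy
        rw [hBdef, Finset.mem_image] at hx hy
        obtain ⟨u, hu, rfl⟩ := hx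
        obtain ⟨v, hv, rfl⟩ := hy
        have huv : u ≠ v := fun h => hxy (by rw [h])
        have := (hcross u hu v hv huv).2
        exact Fin.ext (by simp; omega)

/-- Theorem 2: for `r ≥ 3`, `3 ≤ k_1 < k_2`, and `k_j ≥ 3` for `j ≥ 3`,
`R(k_1, k_2, …, k_r) > (k_1 + 1) * (R(k_2 - k_1 + 1, k_3, …, k_r) - 1)`. -/
theorem ramsey_lower_bound_offdiag (r : ℕ) (hr : 3 ≤ r) (k : Fin r → ℕ)
    (hk1 : 3 ≤ k ⟨0, by omega⟩)
    (hk12 : k ⟨0, by omega⟩ < k ⟨1, by omega⟩)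
    (hk : ∀ j : Fin r, 2 ≤ j.1 → 3 ≤ k j)
    (N M : ℕ)
    (hN : IsRamseyNumber r k N)
    (hM : IsRamseyNumber (r - 1)
      (fun j => if j.1 = 0 then k ⟨1, by omega⟩ - k ⟨0, by omega⟩ + 1
                else k ⟨j.1 + 1, by have := j.2; omega⟩) M) :
    (k ⟨0, by omega⟩ + 1) * (M - 1) < N := by
  by_cases hM1 : M = 1
  · rw [hM1]
    simpa using hN.1
  · have hM2 : 2 ≤ M := by have := hM.1; omega
    have hfail : ¬ RamseyProp (r - 1)
        (fun j => if j.1 = 0 then k ⟨1, by omega⟩ - k ⟨0, by omega⟩ + 1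
                  else k ⟨j.1 + 1, by have := j.2; omega⟩) (M - 1) := by
      intro h
      have := hM.2.2 (M - 1) (by omega) h
      omega
    rw [RamseyProp] at hfail
    push_neg at hfail
    obtain ⟨χ', hsym, hno⟩ := hfail
    have hno0 : ¬ HasMonoClique χ' ⟨0, by omega⟩ (k ⟨1, by omega⟩ - k ⟨0, by omega⟩ + 1) := by
      have h := hno ⟨0, by omega⟩
      simpa using h
    have hnoj : ∀ j : Fin (r - 1), j.1 ≠ 0 →
        ¬ HasMonoClique χ' j (k ⟨j.1 + 1, by have := j.2; omega⟩) := by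
      intro j hj
      have h := hno j
      simp only [if_neg hj] at h
      exact h
    have hcon := construction r hr k (k ⟨0, by omega⟩) (k ⟨1, by omega⟩) rfl rfl hk1 hk12
      (M - 1) χ' hsym hno0 hnoj
    by_contra hle
    push_neg at hle
    exact hcon (ramseyProp_mono hN.2.1 hle)
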